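/- Let S̃₀(r) ≍ r^δ e^{r^α} for r > 1 with α ∈ (0,1], and let Ṽ₀(R) = ∫₀^R S̃₀(r) dr. Then for large R, the Cheeger-type ratio satisfies 4 (S̃₀(R)/Ṽ₀(R))² ≤ C R^{-(2-2α)}, and consequently, choosing R(t) = t^{1/(2-α)}, the quantity (1/Ṽ₀(R(t))) exp( - C t / R(t)^{2-2α} ) is bounded below by C₁ exp(-C₂ t^{α/(2-α)}) for large t. -/

import Mathlib

open Set Real MeasureTheory Filter

private lemma aux_rpow_le_exp (p q : ℝ) (hq : 0 < q) :
    ∀ᶠ t in atTop, t ^ p ≤ exp (t ^ q) := by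
  have h := ((isLittleO_log_rpow_atTop hq).const_mul_left p).bound one_pos
  filter_upwards [h, eventually_ge_atTop (1:ℝ)] with t hb ht
  have ht0 : (0:ℝ) < t := lt_of_lt_of_le one_pos ht
  have hlog : p * log t ≤ t ^ q := by
    calc p * log t ≤ |p * log t| := le_abs_self _
      _ = |p| * |log t| := abs_mul p (log t)
      _ ≤ 1 * |t ^ q| := by simpa [Real.norm_eq_abs] using hb
      _ = t ^ q := by rw [one_mul, abs_of_nonneg (rpow_nonneg ht0.le q)]
  calc t ^ p = exp (log t * p) := by rw [rpow_def_of_pos ht0]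
    _ ≤ exp (t ^ q) := by rw [exp_le_exp]; linarith [hlog]

private lemma aux_ftc (α a b : ℝ) (ha : 0 < a) (hab : a ≤ b) :
    ∫ r in a..b, exp (r ^ α) * (α * r ^ (α - 1)) = exp (b ^ α) - exp (a ^ α) := by
  have huIcc : uIcc a b = Icc a b := uIcc_of_le hab
  have hne : ∀ x ∈ uIcc a b, x ≠ 0 ∨ (1:ℝ) ≤ α := by
    intro x hx
    rw [huIcc] at hx
    exact Or.inl (ne_of_gt (lt_of_lt_of_le ha hx.1))
  have hder : ∀ x ∈ uIcc a b,
      HasDerivAt (fun y => exp (y ^ α)) (exp (x ^ α) * (α * x ^ (α - 1))) x := by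
    intro x hx
    exact (Real.hasDerivAt_rpow_const (hne x hx)).exp
  apply intervalIntegral.integral_eq_sub_of_hasDerivAt hder
  apply ContinuousOn.intervalIntegrable
  apply ContinuousOn.mul
  · exact (continuousOn_id.rpow_const (fun x hx => (hne x hx).imp (fun h => h) (fun h => by linarith))).rexp
  · exact continuousOn_const.mul
      (continuousOn_id.rpow_const (fun x hx => (hne x hx).imp (fun h => h) (fun h => by linarith)))

set_option maxHeartbeats 1600000 in
/-- Sharpness computation: if `S̃₀(r) ≍ r^δ e^{r^α}` for `r > 1` with `α ∈ (0,1]`,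
and `Ṽ₀(R) = ∫₀^R S̃₀`, then for large `R` the Cheeger-type ratio satisfies
`4(S̃₀(R)/Ṽ₀(R))² ≤ C R^{-(2-2α)}`, and with `R(t) = t^{1/(2-α)}` the quantity
`Ṽ₀(R(t))⁻¹ exp(-C t/R(t)^{2-2α})` is bounded below by `C₁ exp(-C₂ t^{α/(2-α)})`
for large `t`. -/
theorem stmt_18 (α δ : ℝ) (hα : α ∈ Ioc (0:ℝ) 1) (S : ℝ → ℝ)
    (hcont : ContinuousOn S (Ici 0)) (hpos : ∀ r ≥ (0:ℝ), 0 < S r)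
    (hcomp : ∃ C > (1:ℝ), ∀ r > (1:ℝ),
      C⁻¹ * (r ^ δ * exp (r ^ α)) ≤ S r ∧ S r ≤ C * (r ^ δ * exp (r ^ α))) :
    ∃ C > (0:ℝ),
      (∃ R₀ > (0:ℝ), ∀ R ≥ R₀,
        4 * (S R / ∫ r in (0:ℝ)..R, S r) ^ 2 ≤ C * R ^ (-(2 - 2*α))) ∧
      (∃ C₁ > (0:ℝ), ∃ C₂ > (0:ℝ), ∃ t₀ > (0:ℝ), ∀ t ≥ t₀,
        C₁ * exp (-C₂ * t ^ (α/(2 - α))) ≤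
          (∫ r in (0:ℝ)..(t ^ (1/(2 - α))), S r)⁻¹ *
            exp (-(C * t / (t ^ (1/(2 - α))) ^ (2 - 2*α)))) := by
  obtain ⟨hα0, hα1⟩ := hα
  obtain ⟨C, hC1, hS⟩ := hcomp
  have hC0 : (0:ℝ) < C := lt_trans one_pos hC1
  obtain ⟨β, hβ⟩ : ∃ β : ℝ, β = δ + 1 - α := ⟨_, rfl⟩
  -- integrability of S on nonnegative intervals
  have hint : ∀ a b : ℝ, 0 ≤ a → 0 ≤ b → IntervalIntegrable S volume a b := by
    intro a b ha hb
    refine (hcont.mono ?_).intervalIntegrable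
    intro x hx
    rcases mem_uIcc.mp hx with ⟨h1, _⟩ | ⟨h1, _⟩
    · exact le_trans ha h1
    · exact le_trans hb h1
  -- positivity of the volume function
  have hVpos : ∀ R : ℝ, 0 < R → 0 < ∫ r in (0:ℝ)..R, S r := fun R hR =>
    intervalIntegral.intervalIntegral_pos_of_pos_on (hint 0 R le_rfl hR.le)
      (fun x hx => hpos x hx.1.le) hR
  -- lower bound constant
  obtain ⟨c, hc⟩ : ∃ c : ℝ, c = C⁻¹ * (2:ℝ) ^ (-|β|) * α⁻¹ * 2⁻¹ := ⟨_, rfl⟩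
  have hc0 : 0 < c := by
    have : (0:ℝ) < (2:ℝ) ^ (-|β|) := rpow_pos_of_pos two_pos _
    rw [hc]; positivity
  -- lower bound for the volume
  have hlow : ∀ᶠ R in atTop, c * (R ^ β * exp (R ^ α)) ≤ ∫ r in (0:ℝ)..R, S r := by
    have hT : Tendsto (fun R : ℝ => R ^ α) atTop atTop := tendsto_rpow_atTop hα0
    have h2 : (0:ℝ) < 1 - (2:ℝ) ^ (-α) := by
      have : (2:ℝ) ^ (-α) < (2:ℝ) ^ (0:ℝ) :=
        rpow_lt_rpow_of_exponent_lt one_lt_two (by linarith)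
      rw [rpow_zero] at this
      linarith
    filter_upwards [eventually_ge_atTop (4:ℝ),
      hT.eventually_ge_atTop (Real.log 2 / (1 - (2:ℝ) ^ (-α)))] with R hR4 hRlog
    have hR0 : (0:ℝ) < R := by linarith
    have hRh0 : (0:ℝ) < R / 2 := by linarith
    have hRh1 : (1:ℝ) < R / 2 := by linarith
    have hhalf : R / 2 ≤ R := by linarith
    -- exponential gap
    have h1 : (R/2) ^ α = (2:ℝ) ^ (-α) * R ^ α := by
      rw [div_rpow hR0.le (by norm_num : (0:ℝ) ≤ 2), Real.rpow_neg (by norm_num : (0:ℝ) ≤ 2)]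
      ring
    have hgap : exp ((R/2) ^ α) ≤ exp (R ^ α) / 2 := by
      have hlog2 : Real.log 2 ≤ (1 - (2:ℝ) ^ (-α)) * R ^ α := by
        rw [div_le_iff₀ h2] at hRlog
        linarith
      have h2' : (R/2) ^ α ≤ R ^ α - Real.log 2 := by rw [h1]; nlinarith
      calc exp ((R/2) ^ α) ≤ exp (R ^ α - Real.log 2) := exp_le_exp.mpr h2'
        _ = exp (R ^ α) / 2 := by rw [Real.exp_sub, Real.exp_log two_pos]
    -- pointwise bound on [R/2, R]
    obtain ⟨K, hK⟩ : ∃ K : ℝ, K = C⁻¹ * ((2:ℝ) ^ (-|β|) * R ^ β) * α⁻¹ := ⟨_, rfl⟩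
    have hKnn : 0 ≤ K := by
      have h3 : (0:ℝ) < (2:ℝ) ^ (-|β|) := rpow_pos_of_pos two_pos _
      have h4 : (0:ℝ) < R ^ β := rpow_pos_of_pos hR0 _
      rw [hK]; positivity
    have key : ∀ r ∈ Icc (R/2) R, K * (exp (r ^ α) * (α * r ^ (α - 1))) ≤ S r := by
      intro r hr
      have hr0 : 0 < r := lt_of_lt_of_le hRh0 hr.1
      have hr1 : 1 < r := lt_of_lt_of_le hRh1 hr.1
      have hrβ : (2:ℝ) ^ (-|β|) * R ^ β ≤ r ^ β := by
        rcases le_or_gt 0 β with hb | hb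
        · have ha1 : (R/2) ^ β ≤ r ^ β := rpow_le_rpow hRh0.le hr.1 hb
          have ha2 : (2:ℝ) ^ (-|β|) * R ^ β = (R/2) ^ β := by
            rw [abs_of_nonneg hb, div_rpow hR0.le (by norm_num : (0:ℝ) ≤ 2),
              Real.rpow_neg (by norm_num : (0:ℝ) ≤ 2)]
            ring
          rw [ha2]; exact ha1
        · have ha1 : R ^ β ≤ r ^ β := rpow_le_rpow_of_nonpos hr0 hr.2 hb.le
          have ha2 : (2:ℝ) ^ (-|β|) ≤ 1 :=
            rpow_le_one_of_one_le_of_nonpos one_le_two (neg_nonpos.mpr (abs_nonneg β))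
          nlinarith [rpow_nonneg hR0.le β]
      have heq : r ^ δ = r ^ β * r ^ (α - 1) := by
        rw [hβ, ← Real.rpow_add hr0]; congr 1; ring
      have hαinv : α⁻¹ * α = 1 := inv_mul_cancel₀ (ne_of_gt hα0)
      have hrexp : (0:ℝ) ≤ r ^ (α - 1) * exp (r ^ α) :=
        mul_nonneg (rpow_nonneg hr0.le _) (exp_pos _).le
      calc K * (exp (r ^ α) * (α * r ^ (α - 1)))
          = C⁻¹ * (((2:ℝ) ^ (-|β|) * R ^ β) * (r ^ (α - 1) * exp (r ^ α))) := by
            rw [hK]; field_simp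
        _ ≤ C⁻¹ * (r ^ β * (r ^ (α - 1) * exp (r ^ α))) := by
            apply mul_le_mul_of_nonneg_left _ (inv_nonneg.mpr hC0.le)
            exact mul_le_mul_of_nonneg_right hrβ hrexp
        _ = C⁻¹ * (r ^ δ * exp (r ^ α)) := by rw [heq]; ring
        _ ≤ S r := (hS r hr1).1
    -- integrate
    have hcontK : ContinuousOn (fun r => K * (exp (r ^ α) * (α * r ^ (α - 1)))) (uIcc (R/2) R) := by
      have hne : ∀ x ∈ uIcc (R/2) R, x ≠ 0 := by
        intro x hx
        rcases mem_uIcc.mp hx with ⟨hx1, _⟩ | ⟨hx1, _⟩ <;> nlinarith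
      apply continuousOn_const.mul
      apply ContinuousOn.mul
      · exact (continuousOn_id.rpow_const (fun x hx => Or.inl (hne x hx))).rexp
      · exact continuousOn_const.mul
          (continuousOn_id.rpow_const (fun x hx => Or.inl (hne x hx)))
    have hmono : K * ∫ r in (R/2)..R, exp (r ^ α) * (α * r ^ (α - 1)) ≤ ∫ r in (R/2)..R, S r := by
      rw [← intervalIntegral.integral_const_mul]
      exact intervalIntegral.integral_mono_on hhalf (hcontK.intervalIntegrable)
        (hint (R/2) R hRh0.le hR0.le) key
    rw [aux_ftc α (R/2) R hRh0 hhalf] at hmono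
    have hsplit : (∫ r in (0:ℝ)..(R/2), S r) + ∫ r in (R/2)..R, S r = ∫ r in (0:ℝ)..R, S r :=
      intervalIntegral.integral_add_adjacent_intervals (hint 0 (R/2) le_rfl hRh0.le)
        (hint (R/2) R hRh0.le hR0.le)
    have hnn : 0 ≤ ∫ r in (0:ℝ)..(R/2), S r :=
      intervalIntegral.integral_nonneg (by linarith) (fun u hu => (hpos u hu.1).le)
    have hfinal : c * (R ^ β * exp (R ^ α)) ≤ K * (exp (R ^ α) - exp ((R/2) ^ α)) := by
      have hhalfexp : exp (R ^ α) / 2 ≤ exp (R ^ α) - exp ((R/2) ^ α) := by linarith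
      calc c * (R ^ β * exp (R ^ α)) = K * (exp (R ^ α) / 2) := by rw [hc, hK]; ring
        _ ≤ K * (exp (R ^ α) - exp ((R/2) ^ α)) := mul_le_mul_of_nonneg_left hhalfexp hKnn
    linarith
  -- upper bound for the volume
  obtain ⟨M, hMdef⟩ : ∃ M : ℝ, M = ∫ r in (0:ℝ)..2, S r := ⟨_, rfl⟩
  have hM0 : 0 ≤ M := by
    rw [hMdef]
    exact intervalIntegral.integral_nonneg (by norm_num) (fun u hu => (hpos u hu.1).le)
  have hup : ∀ᶠ R in atTop,
      (∫ r in (0:ℝ)..R, S r) ≤ (M + C) * (R ^ (|δ| + 1) * exp (R ^ α)) := by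
    filter_upwards [eventually_ge_atTop (2:ℝ)] with R hR2
    have hR0 : (0:ℝ) < R := by linarith
    have hR1 : (1:ℝ) ≤ R := by linarith
    have hXpos : (0:ℝ) < R ^ (|δ| + 1) := rpow_pos_of_pos hR0 _
    have hX1 : (1:ℝ) ≤ R ^ (|δ| + 1) := by
      have := rpow_le_rpow_of_exponent_le hR1 (by positivity : (0:ℝ) ≤ |δ| + 1)
      rwa [rpow_zero] at this
    have hE1 : (1:ℝ) ≤ exp (R ^ α) := one_le_exp (rpow_nonneg hR0.le α)
    have hptwise : ∀ r ∈ Icc (2:ℝ) R, S r ≤ C * (R ^ |δ| * exp (R ^ α)) := by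
      intro r hr
      have hr1 : (1:ℝ) < r := by linarith [hr.1]
      have hδ : r ^ δ ≤ R ^ |δ| := by
        rcases le_or_gt 0 δ with hd | hd
        · rw [abs_of_nonneg hd]; exact rpow_le_rpow (by linarith) hr.2 hd
        · have h1' : r ^ δ ≤ 1 := rpow_le_one_of_one_le_of_nonpos hr1.le hd.le
          have h2' : (1:ℝ) ≤ R ^ |δ| := by
            have := rpow_le_rpow_of_exponent_le hR1 (abs_nonneg δ)
            rwa [rpow_zero] at this
          linarith
      have hexp : exp (r ^ α) ≤ exp (R ^ α) :=
        exp_le_exp.mpr (rpow_le_rpow (by linarith [hr.1]) hr.2 hα0.le)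
      calc S r ≤ C * (r ^ δ * exp (r ^ α)) := (hS r hr1).2
        _ ≤ C * (R ^ |δ| * exp (R ^ α)) := by
            apply mul_le_mul_of_nonneg_left _ hC0.le
            exact mul_le_mul hδ hexp (exp_pos _).le (rpow_nonneg hR0.le _)
    have hI2 : (∫ r in (2:ℝ)..R, S r) ≤ (R - 2) * (C * (R ^ |δ| * exp (R ^ α))) := by
      have := intervalIntegral.integral_mono_on hR2 (hint 2 R (by norm_num) hR0.le)
        (intervalIntegrable_const) hptwise
      rwa [intervalIntegral.integral_const, smul_eq_mul] at this
    have hsplit : M + (∫ r in (2:ℝ)..R, S r) = ∫ r in (0:ℝ)..R, S r := by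
      rw [hMdef]
      exact intervalIntegral.integral_add_adjacent_intervals (hint 0 2 le_rfl (by norm_num))
        (hint 2 R (by norm_num) hR0.le)
    have hRmul : R ^ (|δ| + 1) = R ^ |δ| * R := rpow_add_one (ne_of_gt hR0) _
    have hRabs : (0:ℝ) < R ^ |δ| := rpow_pos_of_pos hR0 _
    have h3 : (R - 2) * (C * (R ^ |δ| * exp (R ^ α))) ≤ C * (R ^ (|δ| + 1) * exp (R ^ α)) := by
      rw [hRmul]
      nlinarith [exp_pos (R ^ α), mul_pos hRabs (exp_pos (R ^ α))]
    have hY1 : (1:ℝ) ≤ R ^ (|δ| + 1) * exp (R ^ α) := by nlinarith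
    have h4 : M ≤ M * (R ^ (|δ| + 1) * exp (R ^ α)) := le_mul_of_one_le_right hM0 hY1
    nlinarith [hsplit, hI2, h3, h4]
  -- definition of the main constant
  obtain ⟨Ca, hCa⟩ : ∃ Ca : ℝ, Ca = 4 * (C / c) ^ 2 := ⟨_, rfl⟩
  have hCa0 : 0 < Ca := by rw [hCa]; positivity
  refine ⟨Ca, hCa0, ?_, ?_⟩
  · -- part (a)
    have ha' : ∀ᶠ R in atTop,
        4 * (S R / ∫ r in (0:ℝ)..R, S r) ^ 2 ≤ Ca * R ^ (-(2 - 2*α)) := by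
      filter_upwards [hlow, eventually_ge_atTop (2:ℝ)] with R hlowR hR2
      have hR0 : (0:ℝ) < R := by linarith
      have hV : 0 < ∫ r in (0:ℝ)..R, S r := hVpos R hR0
      have hnum : S R ≤ C * (R ^ δ * exp (R ^ α)) := (hS R (by linarith)).2
      have hdenpos : 0 < c * (R ^ β * exp (R ^ α)) := by
        have := rpow_pos_of_pos hR0 β
        positivity
      have h1 : S R / (∫ r in (0:ℝ)..R, S r) ≤
          (C * (R ^ δ * exp (R ^ α))) / (c * (R ^ β * exp (R ^ α))) := by
        apply div_le_div₀ (by positivity) hnum hdenpos hlowR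
      have h2 : (C * (R ^ δ * exp (R ^ α))) / (c * (R ^ β * exp (R ^ α)))
          = (C / c) * R ^ (α - 1) := by
        have hRδ2 : R ^ δ = R ^ (α - 1) * R ^ β := by
          rw [hβ, ← Real.rpow_add hR0]; congr 1; ring
        have hβpos : (0:ℝ) < R ^ β := rpow_pos_of_pos hR0 β
        have hX : R ^ β * exp (R ^ α) ≠ 0 := ne_of_gt (by positivity)
        rw [hRδ2]
        calc C * (R ^ (α - 1) * R ^ β * exp (R ^ α)) / (c * (R ^ β * exp (R ^ α)))
            = (C * R ^ (α - 1)) * (R ^ β * exp (R ^ α)) / (c * (R ^ β * exp (R ^ α))) := by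
              ring_nf
          _ = (C * R ^ (α - 1)) / c := by rw [mul_div_mul_right _ _ hX]
          _ = (C / c) * R ^ (α - 1) := by ring
      have h3 : 0 ≤ S R / (∫ r in (0:ℝ)..R, S r) :=
        div_nonneg (hpos R hR0.le).le hV.le
      have h4 : (S R / ∫ r in (0:ℝ)..R, S r) ^ 2 ≤ ((C / c) * R ^ (α - 1)) ^ 2 :=
        pow_le_pow_left₀ h3 (h2 ▸ h1) 2
      have h5 : ((C / c) * R ^ (α - 1)) ^ 2 = (C / c) ^ 2 * R ^ (-(2 - 2*α)) := by
        rw [mul_pow]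
        congr 1
        rw [← Real.rpow_natCast (R ^ (α - 1)) 2, ← Real.rpow_mul hR0.le]
        norm_num
        ring_nf
      rw [hCa]
      linarith [h4, h5]
    obtain ⟨R₀, hR₀⟩ := eventually_atTop.mp ha'
    exact ⟨max R₀ 1, lt_of_lt_of_le one_pos (le_max_right _ _),
      fun R hR => hR₀ R (le_trans (le_max_left _ _) hR)⟩
  · -- part (b)
    have h2α : (0:ℝ) < 2 - α := by linarith
    have hne2 : (2:ℝ) - α ≠ 0 := ne_of_gt h2α
    have hq0 : 0 < α / (2 - α) := div_pos hα0 h2α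
    have htend : Tendsto (fun t : ℝ => t ^ (1/(2 - α))) atTop atTop :=
      tendsto_rpow_atTop (by positivity)
    have hb' : ∀ᶠ t in atTop,
        (M + C + 1)⁻¹ * exp (-(Ca + 3) * t ^ (α/(2 - α))) ≤
          (∫ r in (0:ℝ)..(t ^ (1/(2 - α))), S r)⁻¹ *
            exp (-(Ca * t / (t ^ (1/(2 - α))) ^ (2 - 2*α))) := by
      filter_upwards [htend.eventually hup,
        aux_rpow_le_exp ((|δ| + 1)/(2 - α)) (α/(2 - α)) hq0,
        eventually_ge_atTop (1:ℝ)] with t hupt hpoly ht1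
      have ht0 : (0:ℝ) < t := by linarith
      have hR0 : (0:ℝ) < t ^ (1/(2 - α)) := rpow_pos_of_pos ht0 _
      have hRα : (t ^ (1/(2 - α))) ^ α = t ^ (α/(2 - α)) := by
        rw [← Real.rpow_mul ht0.le]; congr 1
        rw [div_mul_eq_mul_div, one_mul]
      have hRδ : (t ^ (1/(2 - α))) ^ (|δ| + 1) = t ^ ((|δ| + 1)/(2 - α)) := by
        rw [← Real.rpow_mul ht0.le]; congr 1
        rw [div_mul_eq_mul_div, one_mul]
      have hexp_t : Ca * t / (t ^ (1/(2 - α))) ^ (2 - 2*α) = Ca * t ^ (α/(2 - α)) := by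
        have h1' : (t ^ (1/(2 - α))) ^ (2 - 2*α) = t ^ ((2 - 2*α)/(2 - α)) := by
          rw [← Real.rpow_mul ht0.le]; congr 1
          rw [div_mul_eq_mul_div, one_mul]
        have he : α/(2 - α) = 1 - (2 - 2*α)/(2 - α) := by
          rw [eq_sub_iff_add_eq, ← add_div,
            show α + (2 - 2*α) = 2 - α from by ring, div_self hne2]
        have h2' : t / t ^ ((2 - 2*α)/(2 - α)) = t ^ (α/(2 - α)) := by
          rw [he, Real.rpow_sub ht0, Real.rpow_one]
        rw [h1', mul_div_assoc, h2']
      have hTnn : 0 ≤ t ^ (α/(2 - α)) := rpow_nonneg ht0.le _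
      have hV : 0 < ∫ r in (0:ℝ)..(t ^ (1/(2 - α))), S r := hVpos _ hR0
      have hMC : (0:ℝ) ≤ M + C := by linarith
      have hC₁ : (0:ℝ) < M + C + 1 := by linarith
      have hVle : (∫ r in (0:ℝ)..(t ^ (1/(2 - α))), S r) ≤
          (M + C + 1) * (exp (t ^ (α/(2 - α))) * exp (t ^ (α/(2 - α)))) := by
        calc (∫ r in (0:ℝ)..(t ^ (1/(2 - α))), S r)
            ≤ (M + C) * ((t ^ (1/(2 - α))) ^ (|δ| + 1) * exp ((t ^ (1/(2 - α))) ^ α)) := hupt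
          _ = (M + C) * (t ^ ((|δ| + 1)/(2 - α)) * exp (t ^ (α/(2 - α)))) := by
              rw [hRα, hRδ]
          _ ≤ (M + C) * (exp (t ^ (α/(2 - α))) * exp (t ^ (α/(2 - α)))) :=
              mul_le_mul_of_nonneg_left
                (mul_le_mul_of_nonneg_right hpoly (exp_pos _).le) hMC
          _ ≤ (M + C + 1) * (exp (t ^ (α/(2 - α))) * exp (t ^ (α/(2 - α)))) :=
              mul_le_mul_of_nonneg_right (by linarith) (by positivity)
      rw [hexp_t, inv_mul_eq_div (∫ r in (0:ℝ)..(t ^ (1/(2 - α))), S r)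
        (exp (-(Ca * t ^ (α/(2 - α))))), le_div_iff₀ hV]
      calc (M + C + 1)⁻¹ * exp (-(Ca + 3) * t ^ (α/(2 - α))) *
            (∫ r in (0:ℝ)..(t ^ (1/(2 - α))), S r)
          ≤ (M + C + 1)⁻¹ * exp (-(Ca + 3) * t ^ (α/(2 - α))) *
            ((M + C + 1) * (exp (t ^ (α/(2 - α))) * exp (t ^ (α/(2 - α))))) :=
            mul_le_mul_of_nonneg_left hVle (by positivity)
        _ = ((M + C + 1)⁻¹ * (M + C + 1)) *
            (exp (-(Ca + 3) * t ^ (α/(2 - α))) * (exp (t ^ (α/(2 - α))) *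
              exp (t ^ (α/(2 - α))))) := by ring
        _ = exp (-(Ca + 3) * t ^ (α/(2 - α))) * exp (t ^ (α/(2 - α))) *
              exp (t ^ (α/(2 - α))) := by
            rw [inv_mul_cancel₀ (ne_of_gt hC₁)]; ring
        _ = exp (-(Ca + 3) * t ^ (α/(2 - α)) + t ^ (α/(2 - α)) + t ^ (α/(2 - α))) := by
            rw [← Real.exp_add, ← Real.exp_add]
        _ ≤ exp (-(Ca * t ^ (α/(2 - α)))) := by
            rw [exp_le_exp]; nlinarith [hTnn]
    obtain ⟨t₀, ht₀⟩ := eventually_atTop.mp hb'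
    have hMC1 : (0:ℝ) < M + C + 1 := by linarith
    exact ⟨(M + C + 1)⁻¹, by positivity, Ca + 3, by linarith, max t₀ 1,
      lt_of_lt_of_le one_pos (le_max_right _ _),
      fun t ht => ht₀ t (le_trans (le_max_left _ _) ht)⟩
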